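/- For all real M with 0 ≤ M ≤ 1/K and integers 1 ≤ N ≤ K, the function M ↦ N(1−M) lies weakly below the line segment from (0, N) to (N/K, min((K−1)/2, N(K−1)/K)), i.e., N(1−M) ≤ N + (min((K−1)/2, N(K−1)/K) − N)·(M·K/N) for M ∈ [0, 1/K], provided N ≥ 2. -/

import Mathlib

theorem stmt_18 (N K : ℕ) (hN : 2 ≤ N) (hK : N ≤ K) (M : ℝ) (hM0 : 0 ≤ M)
    (hM1 : M ≤ 1 / K) :
    (N : ℝ) * (1 - M) ≤
      (N : ℝ) + (min (((K : ℝ) - 1) / 2) ((N : ℝ) * ((K : ℝ) - 1) / K) - N) *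
        (M * K / N) := by
  have hN' : (2:ℝ) ≤ N := by exact_mod_cast hN
  have hK' : (N:ℝ) ≤ K := by exact_mod_cast hK
  have hNpos : (0:ℝ) < N := by linarith
  have hKpos : (0:ℝ) < K := by linarith
  have h2 : (N:ℝ) ≠ 0 := hNpos.ne'
  have h3 : (K:ℝ) ≠ 0 := hKpos.ne'
  have key : (0:ℝ) ≤ M * (4*(N:ℝ)^2 - 4*N - 1) :=
    mul_nonneg hM0 (by nlinarith)
  have key2 : (0:ℝ) ≤ M * (2*(K:ℝ) - 1 - 2*N)^2 :=
    mul_nonneg hM0 (sq_nonneg _)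
  rcases min_cases (((K : ℝ) - 1) / 2) ((N : ℝ) * ((K : ℝ) - 1) / K) with ⟨h, _⟩ | ⟨h, _⟩ <;>
    rw [h] <;> field_simp <;> nlinarith
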